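/- (Monotonicity and Singleton-type bound for RGHWs) Let C_2 ⊂ C_1 ⊆ F_q^n be linear codes with dim C_1 = k_1 and dim C_2 = k_2, k_2 < k_1. Then 1 ≤ M_1(C_1,C_2) < M_2(C_1,C_2) < ··· < M_{k_1−k_2}(C_1,C_2) ≤ n, and moreover M_r(C_1,C_2) ≤ n − k_1 + r for every 1 ≤ r ≤ k_1 − k_2. -/
import Mathlib


open Classical

/-- The support of a linear subspace `D` of `ι → F`:
the set of coordinates at which some element of `D` is nonzero. -/
def Submodule.suppSet {F ι : Type*} [Field F] (D : Submodule F (ι → F)) : Set ι :=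
  {i | ∃ c ∈ D, c i ≠ 0}

/-- The `r`-th generalized Hamming weight of a linear code `C ⊆ F^ι`:
the minimum support size of an `r`-dimensional subcode of `C`. -/
noncomputable def ghw {F ι : Type*} [Field F] (C : Submodule F (ι → F)) (r : ℕ) : ℕ :=
  sInf {w | ∃ D : Submodule F (ι → F),
    D ≤ C ∧ Module.finrank F D = r ∧ D.suppSet.ncard = w}

/-- The `r`-th relative generalized Hamming weight of the nested pair `C₂ ⊆ C₁`:
the minimum support size of an `r`-dimensional subcode `D` of `C₁` with `D ∩ C₂ = 0`. -/
noncomputable def rghw {F ι : Type*} [Field F] (C₁ C₂ : Submodule F (ι → F)) (r : ℕ) : ℕ :=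
  sInf {w | ∃ D : Submodule F (ι → F),
    D ≤ C₁ ∧ D ⊓ C₂ = ⊥ ∧ Module.finrank F D = r ∧ D.suppSet.ncard = w}

/-- The dual code of `C ⊆ F^n` with respect to the standard Euclidean inner product. -/
def dualCode {F : Type*} [Field F] {n : ℕ} (C : Submodule F (Fin n → F)) :
    Submodule F (Fin n → F) where
  carrier := {x | ∀ c ∈ C, ∑ i, x i * c i = 0}
  add_mem' := by
    intro a b ha hb c hc
    simp only [Set.mem_setOf_eq] at *
    simp [Pi.add_apply, add_mul, Finset.sum_add_distrib, ha c hc, hb c hc]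
  zero_mem' := by simp
  smul_mem' := by
    intro t a ha c hc
    simp only [Set.mem_setOf_eq] at *
    simp [Pi.smul_apply, smul_eq_mul, mul_assoc, ← Finset.mul_sum, ha c hc]

section Aux

open Module Submodule

variable {F : Type*} [Field F]

/-- Any finite-dimensional space has submodules of every dimension up to its own. -/
lemma exists_submodule_finrank_eq' {V : Type*} [AddCommGroup V] [Module F V]
    [FiniteDimensional F V] (r : ℕ) (hr : r ≤ finrank F V) :
    ∃ p : Submodule F V, finrank F p = r := by
  induction r with
  | zero => exact ⟨⊥, finrank_bot F V⟩
  | succ r ih =>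
    obtain ⟨p, hp⟩ := ih (by omega)
    have hlt : finrank F p < finrank F V := by rw [hp]; omega
    obtain ⟨m, hm⟩ := p.exists_of_finrank_lt hlt
    have hm0 : m ≠ 0 := by
      intro h; exact hm 1 one_ne_zero (by simp [h])
    have hinf : p ⊓ (F ∙ m) = ⊥ := by
      rw [eq_bot_iff]
      rintro x ⟨hxp, hxs⟩
      obtain ⟨t, rfl⟩ := Submodule.mem_span_singleton.mp hxs
      rcases eq_or_ne t 0 with rfl | ht
      · simp
      · exact absurd hxp (hm t ht)
    refine ⟨p ⊔ (F ∙ m), ?_⟩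
    have := Submodule.finrank_sup_add_finrank_inf_eq p (F ∙ m)
    rw [hinf, finrank_bot, hp, finrank_span_singleton hm0] at this
    omega

/-- The subspace of vectors vanishing on a coordinate set `T`. -/
def zeroOn (F : Type*) [Field F] {n : ℕ} (T : Finset (Fin n)) :
    Submodule F (Fin n → F) where
  carrier := {x | ∀ i ∈ T, x i = 0}
  add_mem' := fun ha hb i hi => by
    simp only [Pi.add_apply, ha i hi, hb i hi, add_zero]
  zero_mem' := fun i _ => rfl
  smul_mem' := fun t a ha i hi => by
    simp only [Pi.smul_apply, smul_eq_mul, ha i hi, mul_zero]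

lemma mem_zeroOn {n : ℕ} {T : Finset (Fin n)} {x : Fin n → F} :
    x ∈ zeroOn F T ↔ ∀ i ∈ T, x i = 0 := Iff.rfl

lemma zeroOn_anti {n : ℕ} {T T' : Finset (Fin n)} (h : T ⊆ T') :
    zeroOn F T' ≤ zeroOn F T := fun _ hx i hi => hx i (h hi)

/-- Greedy construction: coordinate sets cutting down a code's dimension. -/
lemma exists_vanishing_set {n : ℕ} (C₂ : Submodule F (Fin n → F)) (j : ℕ) :
    ∃ T : Finset (Fin n), T.card ≤ j ∧
      finrank F ↥(C₂ ⊓ zeroOn F T) ≤ finrank F C₂ - j := by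
  induction j with
  | zero =>
    refine ⟨∅, le_rfl, ?_⟩
    have he : C₂ ⊓ zeroOn F (∅ : Finset (Fin n)) = C₂ := by
      rw [inf_eq_left]
      intro x _ i hi
      exact absurd hi (Finset.notMem_empty i)
    rw [he]
    omega
  | succ j ih =>
    obtain ⟨T, hT, hrk⟩ := ih
    by_cases h : finrank F ↥(C₂ ⊓ zeroOn F T) ≤ finrank F C₂ - (j + 1)
    · exact ⟨T, hT.trans (Nat.le_succ j), h⟩
    · have hne : C₂ ⊓ zeroOn F T ≠ ⊥ := by
        intro hb
        rw [hb, finrank_bot] at h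
        omega
      obtain ⟨x, hx, hx0⟩ := Submodule.exists_mem_ne_zero_of_ne_bot hne
      obtain ⟨i, hi⟩ := Function.ne_iff.mp hx0
      have hxi : x i ≠ 0 := by simpa using hi
      refine ⟨insert i T, (Finset.card_insert_le _ _).trans (by omega), ?_⟩
      have hlt : C₂ ⊓ zeroOn F (insert i T) < C₂ ⊓ zeroOn F T := by
        refine lt_of_le_of_ne
          (inf_le_inf_left _ (zeroOn_anti (Finset.subset_insert i T))) ?_
        intro he
        have hx' : x ∈ C₂ ⊓ zeroOn F (insert i T) := he ▸ hx
        exact hxi (hx'.2 i (Finset.mem_insert_self i T))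
      have := Submodule.finrank_lt_finrank_of_lt hlt
      omega

/-- Main existence lemma: an `r`-dimensional subcode of `C₁` meeting `C₂` trivially
whose support has size at most `n - k₁ + r`. -/
lemma exists_subcode {n : ℕ} (C₁ C₂ : Submodule F (Fin n → F)) (hsub : C₂ ≤ C₁)
    (r : ℕ) (hr : r ≤ finrank F C₁ - finrank F C₂) :
    ∃ D : Submodule F (Fin n → F), D ≤ C₁ ∧ D ⊓ C₂ = ⊥ ∧ finrank F D = r ∧
      D.suppSet.ncard ≤ n - finrank F C₁ + r := by
  have hk21 : finrank F C₂ ≤ finrank F C₁ := Submodule.finrank_mono hsub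
  have hk1n : finrank F C₁ ≤ n := by
    have h := Submodule.finrank_le C₁
    rwa [Module.finrank_pi, Fintype.card_fin] at h
  obtain ⟨T₀, hT₀c, hT₀r⟩ := exists_vanishing_set C₂ (finrank F C₂)
  have hbot : C₂ ⊓ zeroOn F T₀ = ⊥ := by
    have h0 : finrank F ↥(C₂ ⊓ zeroOn F T₀) = 0 := by omega
    exact Submodule.finrank_eq_zero.mp h0
  obtain ⟨T, hT₀T, hTc⟩ :=
    Finset.exists_superset_card_eq (n := finrank F C₁ - r) (hT₀c.trans (by omega))
      (by rw [Fintype.card_fin]; omega)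
  have hbotT : C₂ ⊓ zeroOn F T = ⊥ := by
    rw [eq_bot_iff, ← hbot]
    exact inf_le_inf_left _ (zeroOn_anti hT₀T)
  let f : C₁ →ₗ[F] (↥T → F) :=
    LinearMap.pi fun i => (LinearMap.proj (i : Fin n)).comp C₁.subtype
  have hker : LinearMap.ker f = Submodule.comap C₁.subtype (zeroOn F T) := by
    ext x
    constructor
    · intro hx i hi
      have := congrFun (LinearMap.mem_ker.mp hx) ⟨i, hi⟩
      simpa [f] using this
    · intro hx
      rw [LinearMap.mem_ker]
      funext i
      simpa [f] using hx (i : Fin n) i.2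
  have hrange : finrank F ↥(LinearMap.range f) ≤ finrank F C₁ - r := by
    have h1 := Submodule.finrank_le (LinearMap.range f)
    rwa [Module.finrank_pi, Fintype.card_coe, hTc] at h1
  have hrn := LinearMap.finrank_range_add_finrank_ker f
  have hkerrank : r ≤ finrank F ↥(LinearMap.ker f) := by omega
  obtain ⟨p, hp⟩ := exists_submodule_finrank_eq'
    (F := F) (V := ↥(LinearMap.ker f)) r hkerrank
  set D : Submodule F (Fin n → F) :=
    (p.map (LinearMap.ker f).subtype).map C₁.subtype with hD
  have hDle : D ≤ (LinearMap.ker f).map C₁.subtype :=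
    Submodule.map_mono (Submodule.map_subtype_le _ _)
  have hkermap : (LinearMap.ker f).map C₁.subtype = C₁ ⊓ zeroOn F T := by
    rw [hker, Submodule.map_comap_subtype]
  have hDle' : D ≤ C₁ ⊓ zeroOn F T := by rw [← hkermap]; exact hDle
  refine ⟨D, hDle'.trans inf_le_left, ?_, ?_, ?_⟩
  · rw [eq_bot_iff]
    rintro x ⟨hxD, hxC₂⟩
    have hx : x ∈ C₂ ⊓ zeroOn F T := ⟨hxC₂, (hDle' hxD).2⟩
    rwa [hbotT] at hx
  · rw [hD, Submodule.finrank_map_subtype_eq, Submodule.finrank_map_subtype_eq, hp]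
  · have hsupp : D.suppSet ⊆ ↑(Tᶜ) := by
      intro i hi
      obtain ⟨c, hc, hci⟩ := hi
      have hcz : c ∈ zeroOn F T := (hDle' hc).2
      simp only [Finset.coe_compl, Set.mem_compl_iff, Finset.mem_coe]
      intro hiT
      exact hci (hcz i hiT)
    calc D.suppSet.ncard ≤ (↑(Tᶜ) : Set (Fin n)).ncard :=
          Set.ncard_le_ncard hsupp (Set.toFinite _)
      _ = (Tᶜ).card := Set.ncard_coe_finset _
      _ = n - T.card := by rw [Finset.card_compl, Fintype.card_fin]
      _ ≤ n - finrank F C₁ + r := by rw [hTc]; omega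

end Aux

open Module

/-- Monotonicity and Singleton-type bound for RGHWs: for nested codes
`C₂ ⊂ C₁ ⊆ F_q^n` with `dim C₁ = k₁ > k₂ = dim C₂`,
`1 ≤ M_1(C₁,C₂) < ⋯ < M_{k₁-k₂}(C₁,C₂) ≤ n` and `M_r(C₁,C₂) ≤ n - k₁ + r`. -/
theorem statement_5 {F : Type*} [Field F] [Fintype F] {n k₁ k₂ : ℕ}
    (C₁ C₂ : Submodule F (Fin n → F)) (hsub : C₂ ≤ C₁)
    (h1 : Module.finrank F C₁ = k₁) (h2 : Module.finrank F C₂ = k₂) (hlt : k₂ < k₁) :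
    1 ≤ rghw C₁ C₂ 1 ∧
    (∀ r : ℕ, 1 ≤ r → r < k₁ - k₂ → rghw C₁ C₂ r < rghw C₁ C₂ (r + 1)) ∧
    rghw C₁ C₂ (k₁ - k₂) ≤ n ∧
    (∀ r : ℕ, 1 ≤ r → r ≤ k₁ - k₂ → rghw C₁ C₂ r ≤ n - k₁ + r) := by
  subst h1 h2
  have hk21 : finrank F C₂ ≤ finrank F C₁ := Submodule.finrank_mono hsub
  have hk1n : finrank F C₁ ≤ n := by
    have h := Submodule.finrank_le C₁
    rwa [Module.finrank_pi, Fintype.card_fin] at h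
  set S : ℕ → Set ℕ := fun r => {w | ∃ D : Submodule F (Fin n → F),
    D ≤ C₁ ∧ D ⊓ C₂ = ⊥ ∧ Module.finrank F D = r ∧ D.suppSet.ncard = w} with hS
  have hrghw : ∀ r, rghw C₁ C₂ r = sInf (S r) := fun _ => rfl
  have hne : ∀ r : ℕ, r ≤ finrank F C₁ - finrank F C₂ → (S r).Nonempty := by
    intro r hr
    obtain ⟨D, hD1, hD2, hD3, _⟩ := exists_subcode C₁ C₂ hsub r hr
    exact ⟨D.suppSet.ncard, D, hD1, hD2, hD3, rfl⟩
  -- part 4 : Singleton-type bound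
  have part4 : ∀ r : ℕ, 1 ≤ r → r ≤ finrank F C₁ - finrank F C₂ →
      rghw C₁ C₂ r ≤ n - finrank F C₁ + r := by
    intro r _ hr
    obtain ⟨D, hD1, hD2, hD3, hD4⟩ := exists_subcode C₁ C₂ hsub r hr
    exact le_trans (Nat.sInf_le ⟨D, hD1, hD2, hD3, rfl⟩) hD4
  refine ⟨?_, ?_, ?_, part4⟩
  · -- part 1 : 1 ≤ rghw 1
    obtain ⟨D, hD1, hD2, hD3, hD4⟩ := Nat.sInf_mem (hne 1 (by omega))
    rw [hrghw, ← hD4]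
    rw [Nat.one_le_iff_ne_zero, ← Nat.pos_iff_ne_zero]
    rw [Set.ncard_pos (Set.toFinite _)]
    have hDbot : D ≠ ⊥ := by
      intro h
      rw [h, finrank_bot] at hD3
      omega
    obtain ⟨c, hc, hc0⟩ := Submodule.exists_mem_ne_zero_of_ne_bot hDbot
    obtain ⟨i, hi⟩ := Function.ne_iff.mp hc0
    exact ⟨i, c, hc, by simpa using hi⟩
  · -- part 2 : strict monotonicity
    intro r hr1 hr2
    obtain ⟨D, hD1, hD2, hD3, hD4⟩ := Nat.sInf_mem (hne (r + 1) (by omega))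
    have hDbot : D ≠ ⊥ := by
      intro h
      rw [h, finrank_bot] at hD3
      omega
    obtain ⟨c, hc, hc0⟩ := Submodule.exists_mem_ne_zero_of_ne_bot hDbot
    obtain ⟨i, hi⟩ := Function.ne_iff.mp hc0
    have hci : c i ≠ 0 := by simpa using hi
    have hiD : i ∈ D.suppSet := ⟨c, hc, hci⟩
    set f : D →ₗ[F] F := (LinearMap.proj i).comp D.subtype with hf
    have hsurj : LinearMap.range f = ⊤ := by
      rw [eq_top_iff]
      intro t _
      have hmem : c i ∈ LinearMap.range f := ⟨⟨c, hc⟩, rfl⟩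
      have hsm := Submodule.smul_mem _ (t * (c i)⁻¹) hmem
      rwa [smul_eq_mul, mul_assoc, inv_mul_cancel₀ hci, mul_one] at hsm
    have hrn := LinearMap.finrank_range_add_finrank_ker f
    rw [hsurj, finrank_top, finrank_self, hD3] at hrn
    set D' : Submodule F (Fin n → F) := (LinearMap.ker f).map D.subtype with hD'
    have hD'le : D' ≤ D := Submodule.map_subtype_le _ _
    have hfr' : finrank F D' = r := by
      rw [hD', Submodule.finrank_map_subtype_eq]
      omega
    have hbot' : D' ⊓ C₂ = ⊥ := by
      rw [eq_bot_iff, ← hD2]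
      exact inf_le_inf_right _ hD'le
    have hD'i : ∀ x ∈ D', x i = 0 := by
      rintro x ⟨y, hy, rfl⟩
      exact LinearMap.mem_ker.mp hy
    have hsuppsub : D'.suppSet ⊆ D.suppSet \ {i} := by
      rintro j ⟨x, hx, hxj⟩
      refine ⟨⟨x, hD'le hx, hxj⟩, ?_⟩
      intro h
      rw [Set.mem_singleton_iff] at h
      subst h
      exact hxj (hD'i x hx)
    have hssub : D.suppSet \ {i} ⊂ D.suppSet := Set.sdiff_singleton_ssubset.mpr hiD
    calc rghw C₁ C₂ r ≤ D'.suppSet.ncard :=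
          Nat.sInf_le ⟨D', hD'le.trans hD1, hbot', hfr', rfl⟩
      _ ≤ (D.suppSet \ {i}).ncard := Set.ncard_le_ncard hsuppsub (Set.toFinite _)
      _ < D.suppSet.ncard := Set.ncard_lt_ncard hssub (Set.toFinite _)
      _ = rghw C₁ C₂ (r + 1) := hD4
  · -- part 3 : rghw (k₁ - k₂) ≤ n
    have h := part4 (finrank F C₁ - finrank F C₂) (by omega) le_rfl
    omega
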